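/- arXiv:2206.08449 — 10 statements merged into one kernel-verified Lean document; each statement's English description precedes it below -/
import Mathlib

section
/- For all real numbers θ₁, θ₂ with 0 ≤ θ₁ ≤ π/2 and 0 ≤ θ₂ ≤ π/2, and every real number r with 0 ≤ r ≤ 1, one has |arcsin √(r·sin²θ₁) − arcsin √(r·sin²θ₂)| ≤ |θ₁ − θ₂|. (Paper's Lemma 1.) -/
open Real

theorem arcsin_sqrt_mul_sin_sq_contract
    (θ₁ θ₂ r : ℝ)
    (hθ₁ : 0 ≤ θ₁) (hθ₁' : θ₁ ≤ π / 2)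
    (hθ₂ : 0 ≤ θ₂) (hθ₂' : θ₂ ≤ π / 2)
    (hr : 0 ≤ r) (hr' : r ≤ 1) :
    |arcsin (Real.sqrt (r * (Real.sin θ₁) ^ 2)) -
      arcsin (Real.sqrt (r * (Real.sin θ₂) ^ 2))| ≤ |θ₁ - θ₂| := by
  have hπ : (0:ℝ) < π := Real.pi_pos
  have hs1 : 0 ≤ Real.sin θ₁ := Real.sin_nonneg_of_nonneg_of_le_pi hθ₁ (by linarith)
  have hs2 : 0 ≤ Real.sin θ₂ := Real.sin_nonneg_of_nonneg_of_le_pi hθ₂ (by linarith)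
  have hrw : ∀ θ : ℝ, 0 ≤ Real.sin θ →
      Real.sqrt (r * (Real.sin θ) ^ 2) = Real.sqrt r * Real.sin θ := by
    intro θ h
    rw [Real.sqrt_mul hr, Real.sqrt_sq h]
  rw [hrw θ₁ hs1, hrw θ₂ hs2]
  rcases eq_or_lt_of_le hr' with h1 | h1
  · subst h1
    simp only [Real.sqrt_one, one_mul]
    rw [Real.arcsin_sin (by linarith) hθ₁', Real.arcsin_sin (by linarith) hθ₂']
  · -- r < 1
    have hsr : Real.sqrt r < 1 := by
      rw [show (1:ℝ) = Real.sqrt 1 by simp]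
      exact Real.sqrt_lt_sqrt hr h1
    have hsr0 : 0 ≤ Real.sqrt r := Real.sqrt_nonneg r
    set s : Set ℝ := Set.Icc 0 (π / 2) with hsdef
    set f : ℝ → ℝ := fun θ => arcsin (Real.sqrt r * Real.sin θ) with hf
    set f' : ℝ → ℝ := fun θ =>
      1 / Real.sqrt (1 - (Real.sqrt r * Real.sin θ) ^ 2) * (Real.sqrt r * Real.cos θ)
      with hf'
    have hu : ∀ x ∈ s, |Real.sqrt r * Real.sin x| < 1 := by
      intro x hx
      have hx1 := hx.1; have hx2 := hx.2
      have hsx : 0 ≤ Real.sin x := Real.sin_nonneg_of_nonneg_of_le_pi hx1 (by linarith)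
      have hsx' : Real.sin x ≤ 1 := Real.sin_le_one x
      rw [abs_of_nonneg (mul_nonneg hsr0 hsx)]
      calc Real.sqrt r * Real.sin x ≤ Real.sqrt r * 1 := by
            exact mul_le_mul_of_nonneg_left hsx' hsr0
        _ < 1 := by linarith
    have hderiv : ∀ x ∈ s, HasDerivWithinAt f (f' x) s x := by
      intro x hx
      have h := hu x hx
      have h1 : Real.sqrt r * Real.sin x ≠ -1 := by
        intro hc; rw [hc] at h; simp at h
      have h2 : Real.sqrt r * Real.sin x ≠ 1 := by
        intro hc; rw [hc] at h; simp at h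
      have ha : HasDerivAt arcsin
          (1 / Real.sqrt (1 - (Real.sqrt r * Real.sin x) ^ 2)) (Real.sqrt r * Real.sin x) :=
        Real.hasDerivAt_arcsin h1 h2
      have hb : HasDerivAt (fun θ : ℝ => Real.sqrt r * Real.sin θ)
          (Real.sqrt r * Real.cos x) x := (Real.hasDerivAt_sin x).const_mul _
      exact (ha.comp x hb).hasDerivWithinAt
    have hbound : ∀ x ∈ s, ‖f' x‖ ≤ 1 := by
      intro x hx
      have hx1 := hx.1; have hx2 := hx.2
      have hsx : 0 ≤ Real.sin x := Real.sin_nonneg_of_nonneg_of_le_pi hx1 (by linarith)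
      have hcx : 0 ≤ Real.cos x := Real.cos_nonneg_of_mem_Icc ⟨by linarith, hx2⟩
      have hu2 : (Real.sqrt r * Real.sin x) ^ 2 < 1 := by
        have := hu x hx
        nlinarith [abs_nonneg (Real.sqrt r * Real.sin x), sq_abs (Real.sqrt r * Real.sin x)]
      have hpos : 0 < Real.sqrt (1 - (Real.sqrt r * Real.sin x) ^ 2) :=
        Real.sqrt_pos.mpr (by linarith)
      have hkey : Real.sqrt r * Real.cos x ≤ Real.sqrt (1 - (Real.sqrt r * Real.sin x) ^ 2) := by
        rw [show Real.sqrt r * Real.cos x = Real.sqrt (r * (Real.cos x)^2) by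
          rw [Real.sqrt_mul hr, Real.sqrt_sq hcx]]
        apply Real.sqrt_le_sqrt
        have hrs : Real.sqrt r ^ 2 = r := Real.sq_sqrt hr
        nlinarith [Real.sin_sq_add_cos_sq x]
      rw [hf']
      simp only [norm_eq_abs]
      rw [abs_of_nonneg (by positivity)]
      rw [div_mul_eq_mul_div, one_mul, div_le_one hpos]
      exact hkey
    have hconv : Convex ℝ s := convex_Icc 0 (π / 2)
    have h1m : θ₁ ∈ s := ⟨hθ₁, hθ₁'⟩
    have h2m : θ₂ ∈ s := ⟨hθ₂, hθ₂'⟩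
    have := hconv.norm_image_sub_le_of_norm_hasDerivWithin_le hderiv hbound h2m h1m
    simpa [Real.norm_eq_abs, hf] using this
end

section
/- For all real numbers θ₁, θ₂ with 0 ≤ θ₁ ≤ π/2 and 0 ≤ θ₂ ≤ π/2, and every real number s ≥ 1 satisfying s·sin²θ₁ ≤ 1/2 and s·sin²θ₂ ≤ 1/2, one has |arcsin √(s·sin²θ₁) − arcsin √(s·sin²θ₂)| ≤ √(2s)·|θ₁ − θ₂|. (Paper's Lemma 2.) -/
open Real

theorem arcsin_sqrt_mul_sin_sq_stretch
    (θ₁ θ₂ s : ℝ)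
    (hθ₁ : 0 ≤ θ₁) (hθ₁' : θ₁ ≤ π / 2)
    (hθ₂ : 0 ≤ θ₂) (hθ₂' : θ₂ ≤ π / 2)
    (hs : 1 ≤ s)
    (hs₁ : s * (Real.sin θ₁) ^ 2 ≤ 1 / 2)
    (hs₂ : s * (Real.sin θ₂) ^ 2 ≤ 1 / 2) :
    |arcsin (Real.sqrt (s * (Real.sin θ₁) ^ 2)) -
      arcsin (Real.sqrt (s * (Real.sin θ₂) ^ 2))| ≤
      Real.sqrt (2 * s) * |θ₁ - θ₂| := by
  have hs0 : (0:ℝ) ≤ s := le_trans zero_le_one hs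
  set S : Set ℝ := Set.Icc (min θ₁ θ₂) (max θ₁ θ₂) with hS
  have hSsub : S ⊆ Set.Icc 0 (π/2) :=
    Set.Icc_subset_Icc (le_min hθ₁ hθ₂) (max_le hθ₁' hθ₂')
  have hpi2 : (0:ℝ) < π/2 := Real.pi_div_two_pos
  have hsin_le : ∀ x ∈ S, s * Real.sin x ^ 2 ≤ 1/2 := by
    intro x hx
    have hx0 : 0 ≤ x := (hSsub hx).1
    have hx2 : x ≤ π/2 := (hSsub hx).2
    have hmx0 : 0 ≤ max θ₁ θ₂ := le_trans hx0 hx.2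
    have h1 : Real.sin x ≤ Real.sin (max θ₁ θ₂) :=
      Real.strictMonoOn_sin.monotoneOn ⟨by linarith, hx2⟩
        ⟨by linarith, max_le hθ₁' hθ₂'⟩ hx.2
    have hsx : 0 ≤ Real.sin x :=
      Real.sin_nonneg_of_nonneg_of_le_pi hx0 (by linarith [Real.pi_pos])
    have h2 : Real.sin x ^ 2 ≤ Real.sin (max θ₁ θ₂) ^ 2 :=
      pow_le_pow_left₀ hsx h1 2
    rcases max_cases θ₁ θ₂ with ⟨h, _⟩ | ⟨h, _⟩ <;> rw [h] at h2 <;> nlinarith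
  set f' : ℝ → ℝ := fun x =>
    1 / Real.sqrt (1 - (Real.sqrt s * Real.sin x)^2) * (Real.sqrt s * Real.cos x) with hf'
  have hsq : ∀ x ∈ S, (Real.sqrt s * Real.sin x)^2 = s * Real.sin x ^ 2 := by
    intro x hx; rw [mul_pow, Real.sq_sqrt hs0]
  have hderiv : ∀ x ∈ S, HasDerivWithinAt (fun t => arcsin (Real.sqrt s * Real.sin t))
      (f' x) S x := by
    intro x hx
    have hle : (Real.sqrt s * Real.sin x)^2 ≤ 1/2 := by
      rw [hsq x hx]; exact hsin_le x hx
    have hne1 : Real.sqrt s * Real.sin x ≠ 1 := by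
      intro h; rw [h] at hle; norm_num at hle
    have hne2 : Real.sqrt s * Real.sin x ≠ -1 := by
      intro h; rw [h] at hle; norm_num at hle
    exact ((Real.hasDerivAt_arcsin hne2 hne1).comp x
      ((Real.hasDerivAt_sin x).const_mul (Real.sqrt s))).hasDerivWithinAt
  have hbound : ∀ x ∈ S, ‖f' x‖ ≤ Real.sqrt (2 * s) := by
    intro x hx
    have hx0 : 0 ≤ x := (hSsub hx).1
    have hx2 : x ≤ π/2 := (hSsub hx).2
    have hcos0 : 0 ≤ Real.cos x := Real.cos_nonneg_of_mem_Icc ⟨by linarith, hx2⟩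
    have hcos1 : Real.cos x ≤ 1 := Real.cos_le_one x
    have hle : (Real.sqrt s * Real.sin x)^2 ≤ 1/2 := by
      rw [hsq x hx]; exact hsin_le x hx
    have h12 : (1:ℝ)/2 ≤ 1 - (Real.sqrt s * Real.sin x)^2 := by linarith
    have hsqrt : Real.sqrt (1/2) ≤ Real.sqrt (1 - (Real.sqrt s * Real.sin x)^2) :=
      Real.sqrt_le_sqrt h12
    have hpos : 0 < Real.sqrt (1 - (Real.sqrt s * Real.sin x)^2) := by
      apply Real.sqrt_pos.2; linarith
    have hinv : 1 / Real.sqrt (1 - (Real.sqrt s * Real.sin x)^2) ≤ Real.sqrt 2 := by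
      rw [div_le_iff₀ hpos]
      have h2pos : (0:ℝ) < Real.sqrt 2 := Real.sqrt_pos.2 (by norm_num)
      calc (1:ℝ) = Real.sqrt 2 * Real.sqrt (1/2) := by
            rw [← Real.sqrt_mul (by norm_num)]; norm_num
        _ ≤ Real.sqrt 2 * Real.sqrt (1 - (Real.sqrt s * Real.sin x)^2) := by
            exact mul_le_mul_of_nonneg_left hsqrt (le_of_lt h2pos)
    have hnn : 0 ≤ f' x := by
      apply mul_nonneg (by positivity)
      exact mul_nonneg (Real.sqrt_nonneg s) hcos0
    rw [Real.norm_eq_abs, abs_of_nonneg hnn, hf']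
    have : Real.sqrt (2 * s) = Real.sqrt 2 * Real.sqrt s := Real.sqrt_mul (by norm_num) s
    rw [this]
    calc 1 / Real.sqrt (1 - (Real.sqrt s * Real.sin x)^2) * (Real.sqrt s * Real.cos x)
        ≤ Real.sqrt 2 * (Real.sqrt s * Real.cos x) :=
          mul_le_mul_of_nonneg_right hinv (mul_nonneg (Real.sqrt_nonneg s) hcos0)
      _ ≤ Real.sqrt 2 * (Real.sqrt s * 1) := by
          apply mul_le_mul_of_nonneg_left _ (Real.sqrt_nonneg 2)
          exact mul_le_mul_of_nonneg_left hcos1 (Real.sqrt_nonneg s)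
      _ = Real.sqrt 2 * Real.sqrt s := by ring
  have hmem₁ : θ₁ ∈ S := ⟨min_le_left _ _, le_max_left _ _⟩
  have hmem₂ : θ₂ ∈ S := ⟨min_le_right _ _, le_max_right _ _⟩
  have key := (convex_Icc (min θ₁ θ₂) (max θ₁ θ₂)).norm_image_sub_le_of_norm_hasDerivWithin_le
    hderiv hbound hmem₂ hmem₁
  have hrw : ∀ θ, 0 ≤ θ → θ ≤ π/2 →
      Real.sqrt (s * Real.sin θ ^ 2) = Real.sqrt s * Real.sin θ := by
    intro θ h0 h2
    have : 0 ≤ Real.sin θ :=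
      Real.sin_nonneg_of_nonneg_of_le_pi h0 (by linarith [Real.pi_pos])
    rw [Real.sqrt_mul hs0, Real.sqrt_sq this]
  rw [hrw θ₁ hθ₁ hθ₁', hrw θ₂ hθ₂ hθ₂']
  simpa [Real.norm_eq_abs] using key
end

section
/- For all real numbers p₁, p₂ with 0 ≤ p₁ ≤ 1 and 0 ≤ p₂ ≤ 1, one has |arcsin √p₁ − arcsin √p₂| ≤ arcsin √(|p₁ − p₂|). (Paper's Lemma 3.) -/
open Real

theorem abs_arcsin_sqrt_sub_le
    (p₁ p₂ : ℝ)
    (hp₁ : 0 ≤ p₁) (hp₁' : p₁ ≤ 1)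
    (hp₂ : 0 ≤ p₂) (hp₂' : p₂ ≤ 1) :
    |arcsin (Real.sqrt p₁) - arcsin (Real.sqrt p₂)| ≤
      arcsin (Real.sqrt (|p₁ - p₂|)) := by
  wlog h : p₂ ≤ p₁ with H
  · rw [abs_sub_comm, abs_sub_comm p₁]
    exact H p₂ p₁ hp₂ hp₂' hp₁ hp₁' (le_of_not_ge h)
  set d := p₁ - p₂ with hdd
  have hd0 : 0 ≤ d := by simp only [hdd]; linarith
  have hd1 : d ≤ 1 := by simp only [hdd]; linarith
  have habs : |p₁ - p₂| = d := abs_of_nonneg hd0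
  rw [habs]
  have hmono : arcsin (Real.sqrt p₂) ≤ arcsin (Real.sqrt p₁) :=
    Real.monotone_arcsin (Real.sqrt_le_sqrt h)
  have hbnn : (0:ℝ) ≤ arcsin (Real.sqrt d) :=
    Real.arcsin_nonneg.2 (Real.sqrt_nonneg d)
  rw [abs_of_nonneg (by linarith)]
  rw [sub_le_iff_le_add]
  set a := arcsin (Real.sqrt p₂) with ha
  set b := arcsin (Real.sqrt d) with hb
  by_cases hc : π / 2 ≤ b + a
  · exact le_trans (Real.arcsin_le_pi_div_two _) hc
  push_neg at hc
  have hann : (0:ℝ) ≤ a := Real.arcsin_nonneg.2 (Real.sqrt_nonneg _)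
  have hs2 : Real.sin a = Real.sqrt p₂ :=
    Real.sin_arcsin (by linarith [Real.sqrt_nonneg p₂]) (Real.sqrt_le_one.2 hp₂')
  have hsd : Real.sin b = Real.sqrt d :=
    Real.sin_arcsin (by linarith [Real.sqrt_nonneg d]) (Real.sqrt_le_one.2 hd1)
  have hc2 : Real.cos a = Real.sqrt (1 - p₂) := by
    rw [ha, Real.cos_arcsin, Real.sq_sqrt hp₂]
  have hcd : Real.cos b = Real.sqrt (1 - d) := by
    rw [hb, Real.cos_arcsin, Real.sq_sqrt hd0]
  have key : Real.sqrt p₁ ≤ Real.sin (b + a) := by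
    rw [Real.sin_add, hs2, hsd, hc2, hcd]
    have hcross : Real.sqrt (p₂ * d) ≤ Real.sqrt ((1 - d) * (1 - p₂)) := by
      apply Real.sqrt_le_sqrt
      nlinarith
    have hmul1 : Real.sqrt p₂ * Real.sqrt d = Real.sqrt (p₂ * d) :=
      (Real.sqrt_mul hp₂ d).symm
    have hmul2 : Real.sqrt (1 - d) * Real.sqrt (1 - p₂) =
        Real.sqrt ((1 - d) * (1 - p₂)) :=
      (Real.sqrt_mul (by linarith) _).symm
    have hsq : Real.sqrt (p₂ * d) ^ 2 = p₂ * d :=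
      Real.sq_sqrt (by positivity)
    have hX : (0:ℝ) ≤ Real.sqrt d * Real.sqrt (1 - p₂) + Real.sqrt (1 - d) * Real.sqrt p₂ := by
      positivity
    have hp1 : p₁ ≤ (Real.sqrt d * Real.sqrt (1 - p₂) + Real.sqrt (1 - d) * Real.sqrt p₂) ^ 2 := by
      have e1 : Real.sqrt d ^ 2 = d := Real.sq_sqrt hd0
      have e2 : Real.sqrt p₂ ^ 2 = p₂ := Real.sq_sqrt hp₂
      have e3 : Real.sqrt (1 - d) ^ 2 = 1 - d := Real.sq_sqrt (by linarith)
      have e4 : Real.sqrt (1 - p₂) ^ 2 = 1 - p₂ := Real.sq_sqrt (by linarith)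
      have hcr : p₂ * d ≤ (Real.sqrt p₂ * Real.sqrt d) * (Real.sqrt (1 - d) * Real.sqrt (1 - p₂)) := by
        have h1 := mul_le_mul_of_nonneg_left hcross (Real.sqrt_nonneg (p₂ * d))
        have h2 : Real.sqrt (p₂ * d) * Real.sqrt (p₂ * d) = p₂ * d :=
          Real.mul_self_sqrt (by positivity)
        have h3 : Real.sqrt p₂ * Real.sqrt d * (Real.sqrt (1 - d) * Real.sqrt (1 - p₂)) =
            Real.sqrt (p₂ * d) * Real.sqrt ((1 - d) * (1 - p₂)) := by rw [hmul1, hmul2]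
        linarith
      nlinarith
    calc Real.sqrt p₁ ≤ Real.sqrt ((Real.sqrt d * Real.sqrt (1 - p₂) + Real.sqrt (1 - d) * Real.sqrt p₂) ^ 2) :=
          Real.sqrt_le_sqrt hp1
      _ = Real.sqrt d * Real.sqrt (1 - p₂) + Real.sqrt (1 - d) * Real.sqrt p₂ :=
          Real.sqrt_sq hX
  calc arcsin (Real.sqrt p₁) ≤ arcsin (Real.sin (b + a)) :=
        Real.monotone_arcsin key
    _ = b + a := Real.arcsin_sin (by nlinarith [Real.pi_pos]) hc.le
end

section
/- Fix real numbers θ₁, θ₂ with 0 ≤ θ₂ ≤ θ₁ ≤ π/2. Then the function g : [0,1] → ℝ defined by g(r) = arcsin √(r·sin²θ₁) − arcsin √(r·sin²θ₂) is monotone nondecreasing on [0,1]; that is, for all 0 ≤ r ≤ r′ ≤ 1, g(r) ≤ g(r′). -/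
open Real

lemma arcsin_aux_mono (t t' : ℝ) (ht : 0 ≤ t) (htt' : t ≤ t') (ht' : t' ≤ 1) :
    MonotoneOn (fun s => arcsin (t' * s) - arcsin (t * s)) (Set.Icc (0:ℝ) 1) := by
  have ht'0 : 0 ≤ t' := le_trans ht htt'
  have ht1 : t ≤ 1 := le_trans htt' ht'
  apply monotoneOn_of_deriv_nonneg (convex_Icc 0 1)
  · exact ((Real.continuous_arcsin.comp (continuous_const.mul continuous_id)).sub
      (Real.continuous_arcsin.comp (continuous_const.mul continuous_id))).continuousOn
  all_goals
    intro s hs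
    rw [interior_Icc] at hs
    obtain ⟨hs0, hs1⟩ := hs
  -- key facts about t*s and t'*s at interior points
  all_goals
    have h1 : t * s < 1 := lt_of_le_of_lt (by nlinarith) hs1
    have h1' : t' * s < 1 := lt_of_le_of_lt (by nlinarith) hs1
    have h0 : (0:ℝ) ≤ t * s := by positivity
    have h0' : (0:ℝ) ≤ t' * s := by positivity
    have hne1 : t * s ≠ 1 := ne_of_lt h1
    have hne1' : t' * s ≠ 1 := ne_of_lt h1'
    have hnem : t * s ≠ -1 := by linarith
    have hnem' : t' * s ≠ -1 := by linarith
    have hd : HasDerivAt (fun s => arcsin (t * s)) (1 / Real.sqrt (1 - (t*s)^2) * t) s := by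
      have := (Real.hasDerivAt_arcsin hnem hne1).comp s
        ((hasDerivAt_id s).const_mul t)
      simpa [Function.comp_def] using this
    have hd' : HasDerivAt (fun s => arcsin (t' * s)) (1 / Real.sqrt (1 - (t'*s)^2) * t') s := by
      have := (Real.hasDerivAt_arcsin hnem' hne1').comp s
        ((hasDerivAt_id s).const_mul t')
      simpa [Function.comp_def] using this
  · exact ((hd'.sub hd).differentiableAt).differentiableWithinAt
  · rw [show deriv (fun s => arcsin (t' * s) - arcsin (t * s)) s = _ from (hd'.sub hd).deriv]
    have hpos : 0 < Real.sqrt (1 - (t'*s)^2) := Real.sqrt_pos.2 (by nlinarith)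
    have hpos2 : 0 < Real.sqrt (1 - (t*s)^2) := Real.sqrt_pos.2 (by nlinarith)
    have hle : Real.sqrt (1 - (t'*s)^2) ≤ Real.sqrt (1 - (t*s)^2) := by
      apply Real.sqrt_le_sqrt
      nlinarith [mul_nonneg (mul_nonneg (sub_nonneg.2 htt') (by linarith : (0:ℝ) ≤ t' + t)) (sq_nonneg s)]
    have : t / Real.sqrt (1 - (t*s)^2) ≤ t' / Real.sqrt (1 - (t'*s)^2) :=
      div_le_div₀ ht'0 htt' hpos hle
    rw [sub_nonneg]
    calc 1 / Real.sqrt (1 - (t*s)^2) * t = t / Real.sqrt (1 - (t*s)^2) := by ring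
      _ ≤ t' / Real.sqrt (1 - (t'*s)^2) := this
      _ = 1 / Real.sqrt (1 - (t'*s)^2) * t' := by ring

theorem arcsin_sqrt_diff_monotone
    (θ₁ θ₂ : ℝ)
    (hθ₂ : 0 ≤ θ₂) (h₂₁ : θ₂ ≤ θ₁) (hθ₁ : θ₁ ≤ π / 2) :
    ∀ r r' : ℝ, 0 ≤ r → r ≤ r' → r' ≤ 1 →
      arcsin (Real.sqrt (r * (Real.sin θ₁) ^ 2)) -
        arcsin (Real.sqrt (r * (Real.sin θ₂) ^ 2)) ≤
      arcsin (Real.sqrt (r' * (Real.sin θ₁) ^ 2)) -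
        arcsin (Real.sqrt (r' * (Real.sin θ₂) ^ 2)) := by
  intro r r' hr hrr' hr'
  have hθ₁0 : 0 ≤ θ₁ := le_trans hθ₂ h₂₁
  have hπ : θ₂ ≤ π / 2 := le_trans h₂₁ hθ₁
  have hs₁ : 0 ≤ Real.sin θ₁ := Real.sin_nonneg_of_nonneg_of_le_pi hθ₁0 (by linarith [Real.pi_pos])
  have hs₂ : 0 ≤ Real.sin θ₂ := Real.sin_nonneg_of_nonneg_of_le_pi hθ₂ (by linarith [Real.pi_pos])
  have hs₁1 : Real.sin θ₁ ≤ 1 := Real.sin_le_one θ₁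
  have hs21 : Real.sin θ₂ ≤ Real.sin θ₁ := by
    apply Real.strictMonoOn_sin.monotoneOn _ _ h₂₁
    · constructor <;> [linarith [Real.pi_pos]; exact hπ]
    · constructor <;> [linarith [Real.pi_pos]; exact hθ₁]
  have hr0 : 0 ≤ r' := le_trans hr hrr'
  have hsq : ∀ x θ, 0 ≤ x → 0 ≤ Real.sin θ →
      Real.sqrt (x * (Real.sin θ)^2) = Real.sqrt x * Real.sin θ := by
    intro x θ hx hθ
    rw [Real.sqrt_mul hx, Real.sqrt_sq hθ]
  rw [hsq r θ₁ hr hs₁, hsq r θ₂ hr hs₂, hsq r' θ₁ hr0 hs₁, hsq r' θ₂ hr0 hs₂]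
  have ht : 0 ≤ Real.sqrt r := Real.sqrt_nonneg r
  have htt' : Real.sqrt r ≤ Real.sqrt r' := Real.sqrt_le_sqrt hrr'
  have ht' : Real.sqrt r' ≤ 1 := by
    rw [show (1:ℝ) = Real.sqrt 1 by simp]; exact Real.sqrt_le_sqrt hr'
  have hmono := arcsin_aux_mono (Real.sqrt r) (Real.sqrt r') ht htt' ht'
  have := hmono (Set.mem_Icc.2 ⟨hs₂, le_trans hs21 hs₁1⟩)
    (Set.mem_Icc.2 ⟨hs₁, hs₁1⟩) hs21
  simp only at this
  linarith
end

section
/- Let δ be a real number with 0 < δ < 1, and define f(x) = arcsin √(x+δ) − arcsin √x for x ∈ [0, 1−δ]. Then f is antitone (nonincreasing) on [0, (1−δ)/2] and monotone (nondecreasing) on [(1−δ)/2, 1−δ]; moreover f(0) = f(1−δ) = arcsin √δ. In particular, f(x) ≤ arcsin √δ for all x ∈ [0, 1−δ]. -/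
open Real

/-- sqrt(t+δ) - sqrt t is antitone in t ≥ 0. -/
lemma sqrt_shift_anti {δ : ℝ} (hδ : 0 < δ) {s t : ℝ} (hs : 0 ≤ s) (hst : s ≤ t) :
    Real.sqrt (t + δ) - Real.sqrt t ≤ Real.sqrt (s + δ) - Real.sqrt s := by
  have ht : 0 ≤ t := hs.trans hst
  have hA : Real.sqrt (t + δ) ^ 2 = t + δ := Real.sq_sqrt (by linarith)
  have hB : Real.sqrt (s + δ) ^ 2 = s + δ := Real.sq_sqrt (by linarith)
  have ha : Real.sqrt t ^ 2 = t := Real.sq_sqrt ht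
  have hb : Real.sqrt s ^ 2 = s := Real.sq_sqrt hs
  have hab : Real.sqrt s ≤ Real.sqrt t := Real.sqrt_le_sqrt hst
  have hAB : Real.sqrt (s + δ) ≤ Real.sqrt (t + δ) := Real.sqrt_le_sqrt (by linarith)
  have hBb : Real.sqrt s < Real.sqrt (s + δ) := by
    apply Real.sqrt_lt_sqrt hs; linarith
  have h1 : (0:ℝ) ≤ Real.sqrt s := Real.sqrt_nonneg s
  have h2 : (0:ℝ) ≤ Real.sqrt t := Real.sqrt_nonneg t
  nlinarith [mul_nonneg h1 h2, sq_nonneg (Real.sqrt (t+δ) - Real.sqrt t),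
    sq_nonneg (Real.sqrt (s+δ) - Real.sqrt s),
    mul_nonneg (sub_nonneg.2 hAB) (sub_nonneg.2 hab)]

/-- Representation of the difference as a single arcsin. -/
lemma arcsin_repr {δ : ℝ} (hδ : 0 < δ) (hδ' : δ < 1) {x : ℝ} (hx0 : 0 ≤ x)
    (hx1 : x ≤ 1 - δ) :
    arcsin (Real.sqrt (x + δ)) - arcsin (Real.sqrt x)
      = arcsin (Real.sqrt (x * (1 - δ - x) + δ) - Real.sqrt (x * (1 - δ - x))) := by
  have hx1' : x ≤ 1 := by linarith
  have hxδ : x + δ ≤ 1 := by linarith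
  set a := arcsin (Real.sqrt x) with ha
  set b := arcsin (Real.sqrt (x + δ)) with hb
  have ha0 : 0 ≤ a := Real.arcsin_nonneg.2 (Real.sqrt_nonneg _)
  have hb2 : b ≤ π / 2 := Real.arcsin_le_pi_div_two _
  have hab : a ≤ b := Real.monotone_arcsin (Real.sqrt_le_sqrt (by linarith))
  have key : b - a = arcsin (Real.sin (b - a)) :=
    (Real.arcsin_sin (by linarith) (by linarith)).symm
  rw [key, Real.sin_sub]
  congr 1
  have hsa : Real.sin a = Real.sqrt x :=
    Real.sin_arcsin (by linarith [Real.sqrt_nonneg x]) (Real.sqrt_le_one.2 hx1')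
  have hsb : Real.sin b = Real.sqrt (x + δ) :=
    Real.sin_arcsin (by linarith [Real.sqrt_nonneg (x+δ)]) (Real.sqrt_le_one.2 hxδ)
  have hca : Real.cos a = Real.sqrt (1 - x) := by
    rw [ha, Real.cos_arcsin, Real.sq_sqrt hx0]
  have hcb : Real.cos b = Real.sqrt (1 - (x + δ)) := by
    rw [hb, Real.cos_arcsin, Real.sq_sqrt (by linarith)]
  rw [hsa, hsb, hca, hcb,
    ← Real.sqrt_mul (by linarith : (0:ℝ) ≤ x + δ),
    ← Real.sqrt_mul (by linarith : (0:ℝ) ≤ 1 - (x + δ))]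
  have e1 : (x + δ) * (1 - x) = x * (1 - δ - x) + δ := by ring
  have e2 : (1 - (x + δ)) * x = x * (1 - δ - x) := by ring
  rw [e1, e2]

theorem arcsin_sqrt_shift_monotonicity
    (δ : ℝ) (hδ : 0 < δ) (hδ' : δ < 1) :
    AntitoneOn (fun x : ℝ => arcsin (Real.sqrt (x + δ)) - arcsin (Real.sqrt x))
      (Set.Icc 0 ((1 - δ) / 2)) ∧
    MonotoneOn (fun x : ℝ => arcsin (Real.sqrt (x + δ)) - arcsin (Real.sqrt x))
      (Set.Icc ((1 - δ) / 2) (1 - δ)) ∧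
    arcsin (Real.sqrt (0 + δ)) - arcsin (Real.sqrt 0) = arcsin (Real.sqrt δ) ∧
    arcsin (Real.sqrt ((1 - δ) + δ)) - arcsin (Real.sqrt (1 - δ)) = arcsin (Real.sqrt δ) ∧
    ∀ x ∈ Set.Icc (0 : ℝ) (1 - δ),
      arcsin (Real.sqrt (x + δ)) - arcsin (Real.sqrt x) ≤ arcsin (Real.sqrt δ) := by
  have bound : ∀ x ∈ Set.Icc (0 : ℝ) (1 - δ),
      arcsin (Real.sqrt (x + δ)) - arcsin (Real.sqrt x) ≤ arcsin (Real.sqrt δ) := by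
    intro x ⟨hx0, hx1⟩
    rw [arcsin_repr hδ hδ' hx0 hx1]
    apply Real.monotone_arcsin
    have hv : 0 ≤ x * (1 - δ - x) := mul_nonneg hx0 (by linarith)
    have := sqrt_shift_anti hδ le_rfl hv
    simpa using this
  refine ⟨?_, ?_, ?_, ?_, bound⟩
  · intro x ⟨hx0, hx1⟩ y ⟨hy0, hy1⟩ hxy
    have h1 : (1:ℝ) - δ > 0 := by linarith
    dsimp only
    rw [arcsin_repr hδ hδ' hx0 (by linarith), arcsin_repr hδ hδ' hy0 (by linarith)]
    apply Real.monotone_arcsin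
    exact sqrt_shift_anti hδ (mul_nonneg hx0 (by linarith)) (by nlinarith)
  · intro x ⟨hx0, hx1⟩ y ⟨hy0, hy1⟩ hxy
    have h1 : (1:ℝ) - δ > 0 := by linarith
    have hx0' : (0:ℝ) ≤ x := by linarith
    have hy0' : (0:ℝ) ≤ y := by linarith
    dsimp only
    rw [arcsin_repr hδ hδ' hx0' (by linarith), arcsin_repr hδ hδ' hy0' hy1]
    apply Real.monotone_arcsin
    exact sqrt_shift_anti hδ (mul_nonneg hy0' (by linarith)) (by nlinarith)
  · simp
  · have : (1 - δ) + δ = 1 := by ring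
    rw [this, Real.sqrt_one, Real.arcsin_one]
    have h2 : arcsin (Real.sqrt (1 - δ)) = π / 2 - arcsin (Real.sqrt δ) := by
      have hs : 0 ≤ arcsin (Real.sqrt δ) := Real.arcsin_nonneg.2 (Real.sqrt_nonneg _)
      have hs2 : arcsin (Real.sqrt δ) ≤ π / 2 := Real.arcsin_le_pi_div_two _
      rw [← Real.arcsin_sin (x := π / 2 - arcsin (Real.sqrt δ)) (by linarith) (by linarith)]
      congr 1
      rw [Real.sin_pi_div_two_sub, Real.cos_arcsin, Real.sq_sqrt hδ.le]
    rw [h2]; ring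
end

section
/- Let m be a natural number, k an even integer with 0 ≤ k ≤ 2m, and y a real number with 0 ≤ y ≤ 1. Then φ = (arcsin √y + k·π/2)/(2m+1) is the unique real number in the interval [ (k/(2m+1))·(π/2), ((k+1)/(2m+1))·(π/2) ] satisfying sin²((2m+1)·φ) = y. -/
open Real

theorem sin_sq_eq_unique_solution_even_period
    (m : ℕ) (k : ℤ) (hk0 : 0 ≤ k) (hk : k ≤ 2 * m) (hke : Even k)
    (y : ℝ) (hy0 : 0 ≤ y) (hy1 : y ≤ 1) :
    (arcsin (Real.sqrt y) + (k : ℝ) * π / 2) / (2 * m + 1) ∈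
      Set.Icc (((k : ℝ) / (2 * m + 1)) * (π / 2))
        ((((k : ℝ) + 1) / (2 * m + 1)) * (π / 2)) ∧
    (Real.sin ((2 * m + 1) *
        ((arcsin (Real.sqrt y) + (k : ℝ) * π / 2) / (2 * m + 1)))) ^ 2 = y ∧
    ∀ φ ∈ Set.Icc (((k : ℝ) / (2 * m + 1)) * (π / 2))
        ((((k : ℝ) + 1) / (2 * m + 1)) * (π / 2)),
      (Real.sin ((2 * m + 1) * φ)) ^ 2 = y →
        φ = (arcsin (Real.sqrt y) + (k : ℝ) * π / 2) / (2 * m + 1) := by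
  obtain ⟨j, hj⟩ := hke
  have hj' : (k : ℝ) = 2 * (j : ℝ) := by push_cast [hj]; ring
  have hN : (0:ℝ) < 2 * (m:ℝ) + 1 := by positivity
  have hNne : (2 * (m:ℝ) + 1) ≠ 0 := ne_of_gt hN
  have hpi : (0:ℝ) < π := Real.pi_pos
  set a := arcsin (Real.sqrt y) with ha
  have ha0 : 0 ≤ a := Real.arcsin_nonneg.2 (Real.sqrt_nonneg y)
  have ha1 : a ≤ π / 2 := Real.arcsin_le_pi_div_two _
  have hsin : Real.sin a = Real.sqrt y :=
    Real.sin_arcsin (by linarith [Real.sqrt_nonneg y]) (Real.sqrt_le_one.2 hy1)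
  have hsq : ∀ t : ℝ, Real.sin (t + (j:ℝ) * π) ^ 2 = Real.sin t ^ 2 := by
    intro t
    rw [Real.sin_add_int_mul_pi, mul_pow]
    have : ((-1:ℝ) ^ j) ^ 2 = 1 := by
      rw [← zpow_natCast ((-1:ℝ)^j) 2, ← zpow_mul]
      exact Even.neg_one_zpow ⟨j, by ring⟩
    rw [this, one_mul]
  -- key: uniqueness on [0, π/2]
  have key : ∀ t : ℝ, 0 ≤ t → t ≤ π / 2 → Real.sin t ^ 2 = y → t = a := by
    intro t ht0 ht1 hty
    have hsnn : 0 ≤ Real.sin t := Real.sin_nonneg_of_nonneg_of_le_pi ht0 (by linarith)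
    have : Real.sin t = Real.sqrt y := by
      rw [← Real.sqrt_sq hsnn, hty]
    rw [ha, ← this, Real.arcsin_sin (by linarith) ht1]
  refine ⟨⟨?_, ?_⟩, ?_, ?_⟩
  · rw [div_mul_eq_mul_div, div_le_div_iff₀ hN hN]
    nlinarith
  · rw [div_mul_eq_mul_div, div_le_div_iff₀ hN hN]
    nlinarith
  · rw [mul_div_cancel₀ _ hNne]
    have : a + (k:ℝ) * π / 2 = a + (j:ℝ) * π := by rw [hj']; ring
    rw [this, hsq, hsin, Real.sq_sqrt hy0]
  · rintro φ ⟨h1, h2⟩ hφ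
    set t := (2 * (m:ℝ) + 1) * φ - (j:ℝ) * π with htdef
    have ht0 : 0 ≤ t := by
      rw [div_mul_eq_mul_div, div_le_iff₀ hN] at h1
      have : (k:ℝ) * π / 2 = (j:ℝ) * π := by rw [hj']; ring
      simp only [htdef]
      nlinarith
    have ht1 : t ≤ π / 2 := by
      rw [div_mul_eq_mul_div, le_div_iff₀ hN] at h2
      simp only [htdef]
      nlinarith
    have hty : Real.sin t ^ 2 = y := by
      have : (2 * (m:ℝ) + 1) * φ = t + (j:ℝ) * π := by ring
      rw [this, hsq] at hφ
      exact hφ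
    have hEq := key t ht0 ht1 hty
    simp only [htdef] at hEq
    rw [eq_div_iff hNne, hj']
    linear_combination hEq
end

section
/- Let m be a natural number, k an odd integer with 0 ≤ k ≤ 2m, and L, U real numbers with 0 ≤ L ≤ U ≤ 1. For every real number θ in the interval [ (k/(2m+1))·(π/2), ((k+1)/(2m+1))·(π/2) ], one has sin²((2m+1)·θ) ∈ [L, U] if and only if θ ∈ [ (−arcsin √U + (k+1)·π/2)/(2m+1), (−arcsin √L + (k+1)·π/2)/(2m+1) ]. -/
open Real

theorem sin_sq_mem_Icc_iff_odd_period
    (m : ℕ) (k : ℤ) (hk0 : 0 ≤ k) (hk : k ≤ 2 * m) (hko : Odd k)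
    (L U : ℝ) (hL : 0 ≤ L) (hLU : L ≤ U) (hU : U ≤ 1) :
    ∀ θ ∈ Set.Icc (((k : ℝ) / (2 * m + 1)) * (π / 2))
        ((((k : ℝ) + 1) / (2 * m + 1)) * (π / 2)),
      ((Real.sin ((2 * m + 1) * θ)) ^ 2 ∈ Set.Icc L U ↔
        θ ∈ Set.Icc ((-arcsin (Real.sqrt U) + ((k : ℝ) + 1) * π / 2) / (2 * m + 1))
          ((-arcsin (Real.sqrt L) + ((k : ℝ) + 1) * π / 2) / (2 * m + 1))) := by
  intro θ hθ
  have hn : (0:ℝ) < 2 * m + 1 := by positivity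
  have hπ := Real.pi_pos
  obtain ⟨j, hj⟩ := hko
  obtain ⟨hθ1, hθ2⟩ := hθ
  rw [div_mul_eq_mul_div, div_le_iff₀ hn] at hθ1
  rw [div_mul_eq_mul_div, le_div_iff₀ hn] at hθ2
  have e1 : ((k:ℝ) + 1) * (π / 2) = ((k:ℝ) + 1) * π / 2 := by ring
  have e2 : (k:ℝ) * (π / 2) = (k:ℝ) * π / 2 := by ring
  set x : ℝ := ((k : ℝ) + 1) * π / 2 - (2 * m + 1) * θ with hx
  clear_value x
  have hx0 : 0 ≤ x := by
    have : θ * (2 * (m:ℝ) + 1) = (2 * (m:ℝ) + 1) * θ := by ring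
    rw [hx]; linarith
  have hx2 : x ≤ π / 2 := by
    have e3 : θ * (2 * (m:ℝ) + 1) = (2 * (m:ℝ) + 1) * θ := by ring
    rw [hx]; linarith
  -- sin squared equality
  have hsin : Real.sin x ^ 2 = Real.sin ((2 * m + 1) * θ) ^ 2 := by
    have hk1 : ((k : ℝ) + 1) * π / 2 = ((j + 1 : ℤ) : ℝ) * π := by
      push_cast [hj]; ring
    rw [hx, hk1, Real.sin_int_mul_pi_sub, neg_sq, mul_pow,
      show (((-1:ℝ)) ^ (j+1)) ^ 2 = 1 by
        rcases Int.even_or_odd (j + 1) with h | h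
        · rw [h.neg_one_zpow]; norm_num
        · rw [h.neg_one_zpow]; norm_num,
      one_mul]
  have hsx1 : -(π/2) ≤ x := by linarith
  have hsin0 : 0 ≤ Real.sin x :=
    Real.sin_nonneg_of_nonneg_of_le_pi hx0 (by linarith)
  have key : ∀ t : ℝ, 0 ≤ t → t ≤ 1 →
      (t ≤ Real.sin x ^ 2 ↔ arcsin (Real.sqrt t) ≤ x) := by
    intro t ht ht1
    have hst1 : Real.sqrt t ≤ 1 := by
      rw [show (1:ℝ) = Real.sqrt 1 by simp]; exact Real.sqrt_le_sqrt ht1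
    constructor
    · intro h
      have h1 : Real.sqrt t ≤ Real.sin x := by
        have := Real.sqrt_le_sqrt h
        rwa [Real.sqrt_sq hsin0] at this
      calc arcsin (Real.sqrt t) ≤ arcsin (Real.sin x) := Real.monotone_arcsin h1
        _ = x := Real.arcsin_sin hsx1 hx2
    · intro h
      have h1 : Real.sqrt t ≤ Real.sin x := by
        have := Real.sin_le_sin_of_le_of_le_pi_div_two
          (Real.neg_pi_div_two_le_arcsin _) hx2 h
        rwa [Real.sin_arcsin (by linarith [Real.sqrt_nonneg t]) hst1] at this
      calc t = Real.sqrt t ^ 2 := (Real.sq_sqrt ht).symm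
        _ ≤ Real.sin x ^ 2 := by nlinarith [Real.sqrt_nonneg t]
  have keyU : Real.sin x ^ 2 ≤ U ↔ x ≤ arcsin (Real.sqrt U) := by
    have hsU1 : Real.sqrt U ≤ 1 := by
      rw [show (1:ℝ) = Real.sqrt 1 by simp]; exact Real.sqrt_le_sqrt hU
    constructor
    · intro h
      have h1 : Real.sin x ≤ Real.sqrt U := by
        have := Real.sqrt_le_sqrt h
        rwa [Real.sqrt_sq hsin0] at this
      calc x = arcsin (Real.sin x) := (Real.arcsin_sin hsx1 hx2).symm
        _ ≤ arcsin (Real.sqrt U) := Real.monotone_arcsin h1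
    · intro h
      have h1 : Real.sin x ≤ Real.sqrt U := by
        have := Real.sin_le_sin_of_le_of_le_pi_div_two hsx1
          (Real.arcsin_le_pi_div_two _) h
        rwa [Real.sin_arcsin (by linarith [Real.sqrt_nonneg U]) hsU1] at this
      calc Real.sin x ^ 2 ≤ Real.sqrt U ^ 2 := by nlinarith
        _ = U := Real.sq_sqrt (le_trans hL hLU)
  have keyL := key L hL (le_trans hLU hU)
  constructor
  · rintro ⟨h1, h2⟩
    rw [← hsin] at h1 h2
    rw [keyL] at h1
    rw [keyU] at h2
    constructor
    · rw [div_le_iff₀ hn, mul_comm]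
      rw [hx] at h2; linarith
    · rw [le_div_iff₀ hn, mul_comm]
      rw [hx] at h1; linarith
  · rintro ⟨h1, h2⟩
    rw [div_le_iff₀ hn, mul_comm] at h1
    rw [le_div_iff₀ hn, mul_comm] at h2
    have h1' : x ≤ arcsin (Real.sqrt U) := by rw [hx]; linarith
    have h2' : arcsin (Real.sqrt L) ≤ x := by rw [hx]; linarith
    rw [← keyU] at h1'
    rw [← keyL] at h2'
    rw [← hsin]
    exact ⟨h2', h1'⟩
end

section
/- Let m be a natural number, k an integer with 0 ≤ k ≤ 2m, and a, b real numbers with 0 ≤ a ≤ b ≤ π/2 and b − a ≤ (1/(2m+1))·(π/2). Let r be a real number with 0 < r ≤ 1 such that arcsin √(r·sin²b) = ((k+1)/(2m+1))·(π/2). Then the interval [ arcsin √(r·sin²a), arcsin √(r·sin²b) ] is contained in [ (k/(2m+1))·(π/2), ((k+1)/(2m+1))·(π/2) ]. (This is the key property of the paper's adjustment factor: after rescaling the amplitude by r, the confidence interval lies in a single period.) -/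
open Real

theorem adjusted_interval_subset_single_period
    (m : ℕ) (k : ℤ) (hk0 : 0 ≤ k) (hk : k ≤ 2 * m)
    (a b : ℝ) (ha : 0 ≤ a) (hab : a ≤ b) (hb : b ≤ π / 2)
    (hlen : b - a ≤ (1 / (2 * m + 1)) * (π / 2))
    (r : ℝ) (hr0 : 0 < r) (hr1 : r ≤ 1)
    (hadj : arcsin (Real.sqrt (r * (Real.sin b) ^ 2)) =
      (((k : ℝ) + 1) / (2 * m + 1)) * (π / 2)) :
    Set.Icc (arcsin (Real.sqrt (r * (Real.sin a) ^ 2)))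
        (arcsin (Real.sqrt (r * (Real.sin b) ^ 2))) ⊆
      Set.Icc (((k : ℝ) / (2 * m + 1)) * (π / 2))
        ((((k : ℝ) + 1) / (2 * m + 1)) * (π / 2)) := by
  have hpi : (0:ℝ) < π / 2 := by positivity
  have hsa : 0 ≤ Real.sin a := Real.sin_nonneg_of_nonneg_of_le_pi ha (by linarith)
  have hsb : 0 ≤ Real.sin b := Real.sin_nonneg_of_nonneg_of_le_pi (le_trans ha hab)
    (by linarith)
  have hcb : 0 ≤ Real.cos b := Real.cos_nonneg_of_mem_Icc ⟨by linarith, hb⟩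
  have hsr0 : 0 ≤ Real.sqrt r := Real.sqrt_nonneg r
  have hsr1 : Real.sqrt r ≤ 1 := by
    rw [show (1:ℝ) = Real.sqrt 1 by simp]
    exact Real.sqrt_le_sqrt hr1
  have hsqa : Real.sqrt (r * (Real.sin a) ^ 2) = Real.sqrt r * Real.sin a := by
    rw [Real.sqrt_mul hr0.le, Real.sqrt_sq hsa]
  have hsqb : Real.sqrt (r * (Real.sin b) ^ 2) = Real.sqrt r * Real.sin b := by
    rw [Real.sqrt_mul hr0.le, Real.sqrt_sq hsb]
  have hya : Real.sqrt r * Real.sin a ∈ Set.Icc (-1:ℝ) 1 :=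
    ⟨by nlinarith [Real.sin_le_one a], by nlinarith [Real.sin_le_one a]⟩
  have hyb1 : Real.sqrt r * Real.sin b ≤ 1 := by nlinarith [Real.sin_le_one b]
  set A := arcsin (Real.sqrt (r * (Real.sin b) ^ 2)) with hA
  set d := b - a with hd
  have hd0 : 0 ≤ d := by linarith
  have hdpi : d ≤ π / 2 := by linarith
  have hA0 : 0 ≤ A := Real.arcsin_nonneg.2 (Real.sqrt_nonneg _)
  have hApi : A ≤ π / 2 := Real.arcsin_le_pi_div_two _
  -- sin A and cos A
  have hsinA : Real.sin A = Real.sqrt r * Real.sin b := by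
    rw [hA, hsqb, Real.sin_arcsin (by nlinarith) hyb1]
  have hcosA : Real.cos b ≤ Real.cos A := by
    rw [hA, Real.cos_arcsin]
    have h1 : (Real.sqrt (r * Real.sin b ^ 2)) ^ 2 = r * Real.sin b ^ 2 := by
      rw [Real.sq_sqrt (by positivity)]
    rw [h1]
    have h2 : Real.cos b = Real.sqrt (1 - Real.sin b ^ 2) := by
      rw [Real.sin_sq_eq_half_sub]
      rw [show (1:ℝ) - (1/2 - Real.cos (2*b)/2) = (1 + Real.cos (2*b))/2 by ring]
      rw [Real.cos_two_mul]
      rw [show (1 + (2 * Real.cos b ^ 2 - 1))/2 = Real.cos b ^ 2 by ring]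
      rw [Real.sqrt_sq hcb]
    rw [h2]
    apply Real.sqrt_le_sqrt
    nlinarith
  have hcosA0 : 0 ≤ Real.cos A := Real.cos_arcsin_nonneg _
  -- key: A - d ≤ arcsin (√r sin a)
  have hsd : 0 ≤ Real.sin d := Real.sin_nonneg_of_nonneg_of_le_pi hd0 (by linarith)
  have key : A - d ≤ arcsin (Real.sqrt (r * (Real.sin a) ^ 2)) := by
    rw [hsqa]
    rw [Real.le_arcsin_iff_sin_le ⟨by linarith, by linarith⟩ hya]
    have := Real.sin_sub A d
    have hab' : Real.sin (b - d) = Real.sin a := by rw [hd]; ring_nf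
    have hsinbd : Real.sin b * Real.cos d - Real.cos b * Real.sin d = Real.sin a := by
      rw [← Real.sin_sub, hab']
    rw [this, hsinA]
    have h1 : Real.sqrt r * Real.sin a
        = Real.sqrt r * (Real.sin b * Real.cos d) - Real.sqrt r * (Real.cos b * Real.sin d) := by
      rw [← hsinbd]; ring
    have h2 : Real.sqrt r * (Real.cos b * Real.sin d) ≤ Real.cos A * Real.sin d := by
      have h3 : Real.cos b * Real.sin d ≤ Real.cos A * Real.sin d :=
        mul_le_mul_of_nonneg_right hcosA hsd
      nlinarith [mul_nonneg hcb hsd]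
    linarith [h1, h2]
  clear_value A d
  -- conclude
  intro x hx
  constructor
  · have h0 : ((k:ℝ) / (2 * ↑m + 1)) * (π / 2)
        = (((k:ℝ)+1) / (2 * ↑m + 1)) * (π / 2) - (1 / (2 * ↑m + 1)) * (π / 2) := by ring
    rw [h0, ← hadj]
    have hx1 := hx.1
    linarith only [key, hx1, hlen, hd0]
  · rw [← hadj]; exact hx.2
end

section
/- Let E be an inner product space over ℂ, and let e₀, e₁ ∈ E be orthonormal vectors (i.e., ‖e₀‖ = ‖e₁‖ = 1 and ⟪e₀, e₁⟫ = 0). Let θ be a real number and set ψ = (sin θ)·e₁ + (cos θ)·e₀. Define the maps S : E → E by S(x) = x − 2·⟪e₁, x⟫·e₁ (the sign flip on the good state) and R : E → E by R(x) = 2·⟪ψ, x⟫·ψ − x (the negated reflection about ψ), and let Q = R ∘ S be the Grover operator. Then for every natural number m, the m-fold iterate of Q applied to ψ satisfies Q^[m](ψ) = (sin((2m+1)·θ))·e₁ + (cos((2m+1)·θ))·e₀. -/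
open Real

theorem grover_iterate
    {E : Type*} [NormedAddCommGroup E] [InnerProductSpace ℂ E]
    (e₀ e₁ : E) (he₀ : ‖e₀‖ = 1) (he₁ : ‖e₁‖ = 1)
    (horth : (inner ℂ e₀ e₁ : ℂ) = 0)
    (θ : ℝ)
    (ψ : E) (hψ : ψ = ((Real.sin θ : ℂ)) • e₁ + ((Real.cos θ : ℂ)) • e₀)
    (S : E → E) (hS : ∀ x, S x = x - (2 * (inner ℂ e₁ x : ℂ)) • e₁)
    (R : E → E) (hR : ∀ x, R x = (2 * (inner ℂ ψ x : ℂ)) • ψ - x)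
    (Q : E → E) (hQ : Q = R ∘ S) :
    ∀ m : ℕ,
      Q^[m] ψ = ((Real.sin ((2 * m + 1) * θ) : ℂ)) • e₁ +
        ((Real.cos ((2 * m + 1) * θ) : ℂ)) • e₀ := by
  have h11 : (inner ℂ e₁ e₁ : ℂ) = 1 := by
    rw [inner_self_eq_norm_sq_to_K, he₁]; norm_num
  have h00 : (inner ℂ e₀ e₀ : ℂ) = 1 := by
    rw [inner_self_eq_norm_sq_to_K, he₀]; norm_num
  have h10 : (inner ℂ e₁ e₀ : ℂ) = 0 := by
    rw [← inner_conj_symm, horth]; simp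
  have key : ∀ α : ℝ, Q ((Real.sin α : ℂ) • e₁ + (Real.cos α : ℂ) • e₀)
      = (Real.sin (α + 2 * θ) : ℂ) • e₁ + (Real.cos (α + 2 * θ) : ℂ) • e₀ := by
    intro α
    have hA : (inner ℂ e₁ ((Real.sin α : ℂ) • e₁ + (Real.cos α : ℂ) • e₀) : ℂ)
        = (Real.sin α : ℂ) := by
      simp [inner_add_right, inner_smul_right, h11, h10, he₁]
    have hSv : S ((Real.sin α : ℂ) • e₁ + (Real.cos α : ℂ) • e₀)
        = (-(Real.sin α : ℂ)) • e₁ + (Real.cos α : ℂ) • e₀ := by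
      rw [hS, hA]; module
    have hB : (inner ℂ ψ ((-(Real.sin α : ℂ)) • e₁ + (Real.cos α : ℂ) • e₀) : ℂ)
        = (Real.cos (α + θ) : ℂ) := by
      rw [hψ]
      simp only [inner_add_right, inner_add_left, inner_smul_right, inner_smul_left,
        h11, h00, h10, horth, Complex.conj_ofReal, Real.cos_add]
      push_cast
      ring
    have hs' : Real.sin (α + 2 * θ)
        = 2 * Real.cos (α + θ) * Real.sin θ + Real.sin α := by
      rw [show α + 2 * θ = α + θ + θ by ring]
      simp only [Real.sin_add, Real.cos_add]
      linear_combination Real.sin α * (Real.sin_sq_add_cos_sq θ)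
    have hc' : Real.cos (α + 2 * θ)
        = 2 * Real.cos (α + θ) * Real.cos θ - Real.cos α := by
      rw [show α + 2 * θ = α + θ + θ by ring]
      simp only [Real.sin_add, Real.cos_add]
      linear_combination (-Real.cos α) * (Real.cos_sq_add_sin_sq θ)
    have hs : (Real.sin (α + 2 * θ) : ℂ)
        = 2 * (Real.cos (α + θ) : ℂ) * (Real.sin θ : ℂ) + (Real.sin α : ℂ) := by
      exact_mod_cast congrArg (Complex.ofReal) hs'
    have hc : (Real.cos (α + 2 * θ) : ℂ)
        = 2 * (Real.cos (α + θ) : ℂ) * (Real.cos θ : ℂ) - (Real.cos α : ℂ) := by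
      exact_mod_cast congrArg (Complex.ofReal) hc'
    rw [hQ, Function.comp_apply, hSv, hR, hB, hψ, hs, hc]
    module
  intro m
  induction m with
  | zero => rw [hψ]; norm_num
  | succ n ih =>
    rw [Function.iterate_succ_apply', ih, key,
      show ((2 * n + 1) * θ + 2 * θ) = (2 * (n + 1 : ℕ) + 1) * θ by push_cast; ring]
end

section
/- Let (Ω, ℱ, P) be a probability space and let Z₁, Z₂, … be independent, identically distributed random variables taking values in {0, 1} with P(Zᵢ = 1) = q for some q ∈ [0,1]. Let N be a positive integer, T a natural number, and α ∈ (0,1). For each positive integer j define η_j = √( log( (π²·(T+1)/(3α))·j² ) / (2·j·N) ). Then P( ∃ j ∈ {1, 2, …} such that | (1/(j·N))·Σ_{i=1}^{j·N} Zᵢ − q | ≥ η_j ) ≤ α/(T+1). -/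
open Real MeasureTheory ProbabilityTheory


lemma hoeffding_bernoulli_mgf {q : ℝ} (hq0 : 0 ≤ q) (hq1 : q ≤ 1) (t : ℝ) :
    1 - q + q * exp t ≤ exp (t * q + t ^ 2 / 8) := by
  rcases hq0.eq_or_lt with h0 | h0
  · subst h0
    simpa using Real.one_le_exp (by positivity : (0:ℝ) ≤ t ^ 2 / 8)
  rcases hq1.eq_or_lt with h1 | h1
  · subst h1
    simp only [sub_self, zero_add, one_mul, mul_one]
    rw [Real.exp_le_exp]
    nlinarith [sq_nonneg t]
  -- 0 < q < 1
  set h : ℝ → ℝ := fun s => 1 - q + q * exp s with hh_def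
  have hpos : ∀ s, 0 < h s := fun s => by
    have := Real.exp_pos s; simp only [hh_def]; nlinarith
  set u : ℝ → ℝ := fun s => q * exp s / h s with hu_def
  have hhd : ∀ s, HasDerivAt h (q * exp s) s := fun s =>
    ((Real.hasDerivAt_exp s).const_mul q).const_add (1 - q)
  have hud : ∀ s, HasDerivAt u (u s - (u s) ^ 2) s := by
    intro s
    have := ((Real.hasDerivAt_exp s).const_mul q).div (hhd s) (hpos s).ne'
    refine HasDerivAt.congr_deriv (this : HasDerivAt u _ s) ?_
    have h1 := (hpos s).ne'
    simp only [hu_def, hh_def]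
    field_simp
  set φ : ℝ → ℝ := fun s => q + s / 4 - u s with hφ_def
  have hφd : ∀ s, HasDerivAt φ (1 / 4 - (u s - (u s) ^ 2)) s := by
    intro s
    have h1 : HasDerivAt (fun x : ℝ => q + x / 4) (1 / 4) s := by
      simpa using (((hasDerivAt_id s).div_const 4).const_add q)
    exact h1.sub (hud s)
  have hu01 : ∀ s, 0 < u s ∧ u s < 1 := by
    intro s
    constructor
    · exact div_pos (by positivity) (hpos s)
    · rw [div_lt_one (hpos s)]
      simp only [hh_def]; nlinarith
  have hφmono : Monotone φ := by
    apply monotone_of_deriv_nonneg (fun s => (hφd s).differentiableAt)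
    intro s
    rw [(hφd s).deriv]
    obtain ⟨hl, hr⟩ := hu01 s
    nlinarith [sq_nonneg (u s - 1/2)]
  have hφ0 : φ 0 = 0 := by
    simp only [hφ_def, hu_def, hh_def, Real.exp_zero, mul_one]
    have : 1 - q + q = 1 := by ring
    rw [this]
    ring
  set g : ℝ → ℝ := fun s => s * q + s ^ 2 / 8 - Real.log (h s) with hg_def
  have hgd : ∀ s, HasDerivAt g (φ s) s := by
    intro s
    have h1 : HasDerivAt (fun x : ℝ => x * q + x ^ 2 / 8) (q + s / 4) s := by
      have := ((hasDerivAt_id s).mul_const q).add ((hasDerivAt_pow 2 s).div_const 8)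
      refine HasDerivAt.congr_deriv (this : HasDerivAt (fun x : ℝ => x * q + x ^ 2 / 8) _ s) ?_
      simp; ring
    have h2 : HasDerivAt (fun x => Real.log (h x)) (q * exp s / h s) s :=
      (hhd s).log (hpos s).ne'
    exact h1.sub h2
  have hg0 : g 0 = 0 := by
    simp only [hg_def, hh_def, Real.exp_zero, mul_one]
    norm_num
  have hgnn : ∀ s, 0 ≤ g s := by
    intro s
    have hgdiff : Differentiable ℝ g := fun x => (hgd x).differentiableAt
    rcases le_total 0 s with hs | hs
    · have hmono : MonotoneOn g (Set.Ici 0) := by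
        apply monotoneOn_of_deriv_nonneg (convex_Ici 0) hgdiff.continuous.continuousOn
          (hgdiff.differentiableOn)
        intro x hx
        rw [interior_Ici] at hx
        rw [(hgd x).deriv, ← hφ0]
        exact hφmono (le_of_lt hx)
      have := hmono (Set.self_mem_Ici) hs hs
      rwa [hg0] at this
    · have hanti : AntitoneOn g (Set.Iic 0) := by
        apply antitoneOn_of_deriv_nonpos (convex_Iic 0) hgdiff.continuous.continuousOn
          (hgdiff.differentiableOn)
        intro x hx
        rw [interior_Iic] at hx
        rw [(hgd x).deriv, ← hφ0]
        exact hφmono (le_of_lt hx)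
      have := hanti hs (Set.self_mem_Iic) hs
      rwa [hg0] at this
  have key := hgnn t
  have hlog : Real.log (h t) ≤ t * q + t ^ 2 / 8 := by
    simp only [hg_def] at key; linarith
  calc 1 - q + q * exp t = h t := rfl
    _ = Real.exp (Real.log (h t)) := (Real.exp_log (hpos t)).symm
    _ ≤ exp (t * q + t ^ 2 / 8) := Real.exp_le_exp.mpr hlog


lemma bernoulli_exp_eq {Z : Ω → ℝ} (hval : ∀ ω, Z ω = 0 ∨ Z ω = 1) (t : ℝ) (ω : Ω) :
    exp (t * Z ω) = 1 + (exp t - 1) * Z ω := by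
  rcases hval ω with h | h <;> simp [h]

lemma bernoulli_integral {Ω : Type*} [MeasurableSpace Ω] (P : Measure Ω) [IsProbabilityMeasure P]
    {Z : Ω → ℝ} (hmeas : Measurable Z) (hval : ∀ ω, Z ω = 0 ∨ Z ω = 1)
    {q : ℝ} (hq0 : 0 ≤ q) (hq : P {ω | Z ω = 1} = ENNReal.ofReal q) :
    ∫ ω, Z ω ∂P = q := by
  have hset : MeasurableSet {ω | Z ω = 1} := hmeas (measurableSet_singleton 1)
  have hind : ∀ ω, Z ω = Set.indicator {ω | Z ω = 1} (fun _ => (1:ℝ)) ω := by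
    intro ω
    rcases hval ω with h | h
    · rw [h, Set.indicator_of_notMem]
      simp only [Set.mem_setOf_eq, h]; norm_num
    · rw [h, Set.indicator_of_mem]
      exact h
  calc ∫ ω, Z ω ∂P = ∫ ω, Set.indicator {ω | Z ω = 1} (fun _ => (1:ℝ)) ω ∂P := by
        exact integral_congr_ae (Filter.Eventually.of_forall hind)
    _ = (P {ω | Z ω = 1}).toReal • (1:ℝ) := integral_indicator_const 1 hset
    _ = q := by rw [hq, ENNReal.toReal_ofReal hq0]; simp

lemma bernoulli_integrable {Ω : Type*} [MeasurableSpace Ω] (P : Measure Ω) [IsProbabilityMeasure P]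
    {Z : Ω → ℝ} (hmeas : Measurable Z) (hval : ∀ ω, Z ω = 0 ∨ Z ω = 1) :
    Integrable Z P := by
  refine Integrable.mono' (integrable_const 1) hmeas.aestronglyMeasurable ?_
  filter_upwards with ω
  rcases hval ω with h | h <;> simp [h]

lemma bernoulli_mgf {Ω : Type*} [MeasurableSpace Ω] (P : Measure Ω) [IsProbabilityMeasure P]
    {Z : Ω → ℝ} (hmeas : Measurable Z) (hval : ∀ ω, Z ω = 0 ∨ Z ω = 1)
    {q : ℝ} (hq0 : 0 ≤ q) (hq : P {ω | Z ω = 1} = ENNReal.ofReal q) (t : ℝ) :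
    mgf Z P t = 1 - q + q * exp t := by
  have hZint : Integrable Z P := bernoulli_integrable P hmeas hval
  have : mgf Z P t = ∫ ω, (1 + (exp t - 1) * Z ω) ∂P := by
    unfold mgf
    congr 1
    ext ω
    rcases hval ω with h | h <;> simp [h]
  rw [this, integral_add (integrable_const 1) (hZint.const_mul _), integral_const,
    integral_const_mul, bernoulli_integral P hmeas hval hq0 hq]
  simp
  ring

lemma hoeffding_two_sided {Ω : Type*} [MeasurableSpace Ω] (P : Measure Ω) [IsProbabilityMeasure P]
    (Z : ℕ → Ω → ℝ) (hmeas : ∀ i, Measurable (Z i))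
    (hval : ∀ i ω, Z i ω = 0 ∨ Z i ω = 1)
    (hindep : iIndepFun Z P)
    (q : ℝ) (hq0 : 0 ≤ q) (hq1 : q ≤ 1)
    (hq : ∀ i, P {ω | Z i ω = 1} = ENNReal.ofReal q)
    (n : ℕ) (hn : 0 < n) (η : ℝ) (hη : 0 < η) :
    P {ω | η ≤ |(1 / (n : ℝ)) * ∑ i ∈ Finset.range n, Z i ω - q|} ≤
      ENNReal.ofReal (2 * exp (-(2 * n * η ^ 2))) := by
  have hn' : (0:ℝ) < n := Nat.cast_pos.mpr hn
  set S : Ω → ℝ := ∑ i ∈ Finset.range n, Z i with hS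
  have hSapp : ∀ ω, S ω = ∑ i ∈ Finset.range n, Z i ω := fun ω => Finset.sum_apply ω _ _
  have hint : ∀ (t : ℝ) (i : ℕ), Integrable (fun ω => exp (t * Z i ω)) P := by
    intro t i
    have heq : (fun ω => exp (t * Z i ω)) = fun ω => 1 + (exp t - 1) * Z i ω := by
      funext ω; rcases hval i ω with h | h <;> simp [h]
    rw [heq]
    exact (integrable_const 1).add ((bernoulli_integrable P (hmeas i) (hval i)).const_mul _)
  have hSint : ∀ t : ℝ, Integrable (fun ω => exp (t * S ω)) P := fun t =>
    hindep.integrable_exp_mul_sum hmeas (fun i _ => hint t i)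
  have hmgfS : ∀ t : ℝ, mgf S P t = (1 - q + q * exp t) ^ n := by
    intro t
    rw [hS, hindep.mgf_sum hmeas]
    have : ∀ i ∈ Finset.range n, mgf (Z i) P t = 1 - q + q * exp t := fun i _ =>
      bernoulli_mgf P (hmeas i) (hval i) hq0 (hq i) t
    rw [Finset.prod_congr rfl this, Finset.prod_const, Finset.card_range]
  set e : ℝ := exp (-(2 * n * η ^ 2)) with he
  have hbase_nonneg : ∀ t : ℝ, 0 ≤ 1 - q + q * exp t := by
    intro t
    have h1 := Real.exp_pos t
    nlinarith
  have hpow : ∀ t : ℝ, (1 - q + q * exp t) ^ n ≤ exp (n * (t * q + t ^ 2 / 8)) := by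
    intro t
    rw [Real.exp_nat_mul]
    exact pow_le_pow_left₀ (hbase_nonneg t) (hoeffding_bernoulli_mgf hq0 hq1 t) n
  have hup : (P {ω | (n:ℝ) * (q + η) ≤ S ω}).toReal ≤ e := by
    have h := measure_ge_le_exp_mul_mgf (X := S) (μ := P) (t := 4 * η) ((n:ℝ) * (q + η))
      (by positivity) (hSint _)
    refine h.trans ?_
    rw [hmgfS]
    calc exp (-(4 * η) * ((n:ℝ) * (q + η))) * (1 - q + q * exp (4 * η)) ^ n
        ≤ exp (-(4 * η) * ((n:ℝ) * (q + η))) * exp (n * (4 * η * q + (4 * η) ^ 2 / 8)) := by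
          exact mul_le_mul_of_nonneg_left (hpow (4 * η)) (le_of_lt (Real.exp_pos _))
      _ = e := by rw [← Real.exp_add, he]; congr 1; ring
  have hlo : (P {ω | S ω ≤ (n:ℝ) * (q - η)}).toReal ≤ e := by
    have h := measure_le_le_exp_mul_mgf (X := S) (μ := P) (t := -(4 * η)) ((n:ℝ) * (q - η))
      (by nlinarith) (hSint _)
    refine h.trans ?_
    rw [hmgfS]
    calc exp (-(-(4 * η)) * ((n:ℝ) * (q - η))) * (1 - q + q * exp (-(4 * η))) ^ n
        ≤ exp (-(-(4 * η)) * ((n:ℝ) * (q - η))) * exp (n * (-(4 * η) * q + (-(4 * η)) ^ 2 / 8)) := by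
          exact mul_le_mul_of_nonneg_left (hpow (-(4 * η))) (le_of_lt (Real.exp_pos _))
      _ = e := by rw [← Real.exp_add, he]; congr 1; ring
  have hsub : {ω | η ≤ |(1 / (n : ℝ)) * ∑ i ∈ Finset.range n, Z i ω - q|} ⊆
      {ω | (n:ℝ) * (q + η) ≤ S ω} ∪ {ω | S ω ≤ (n:ℝ) * (q - η)} := by
    intro ω hω
    simp only [Set.mem_setOf_eq] at hω
    rw [← hSapp] at hω
    have hcancel : (n:ℝ) * (1 / (n:ℝ)) = 1 := mul_one_div_cancel hn'.ne'
    rcases le_abs.mp hω with h | h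
    · left
      simp only [Set.mem_setOf_eq]
      have h2 := mul_le_mul_of_nonneg_left h hn'.le
      have h3 : (n:ℝ) * (1 / (n:ℝ) * S ω - q) = S ω - (n:ℝ) * q := by field_simp
      rw [h3] at h2
      linarith
    · right
      simp only [Set.mem_setOf_eq]
      have h2 := mul_le_mul_of_nonneg_left h hn'.le
      have h3 : (n:ℝ) * (-(1 / (n:ℝ) * S ω - q)) = (n:ℝ) * q - S ω := by field_simp; ring
      rw [h3] at h2
      linarith
  calc P _ ≤ P ({ω | (n:ℝ) * (q + η) ≤ S ω} ∪ {ω | S ω ≤ (n:ℝ) * (q - η)}) := measure_mono hsub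
    _ ≤ P {ω | (n:ℝ) * (q + η) ≤ S ω} + P {ω | S ω ≤ (n:ℝ) * (q - η)} := measure_union_le _ _
    _ ≤ ENNReal.ofReal e + ENNReal.ofReal e := by
        gcongr
        · rw [← ENNReal.ofReal_toReal (measure_ne_top P _)]
          exact ENNReal.ofReal_le_ofReal hup
        · rw [← ENNReal.ofReal_toReal (measure_ne_top P _)]
          exact ENNReal.ofReal_le_ofReal hlo
    _ = ENNReal.ofReal (2 * e) := by
        rw [← ENNReal.ofReal_add (le_of_lt (Real.exp_pos _)) (le_of_lt (Real.exp_pos _))]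
        congr 1
        ring

theorem simultaneous_hoeffding_confidence
    {Ω : Type*} [MeasurableSpace Ω] (P : Measure Ω) [IsProbabilityMeasure P]
    (Z : ℕ → Ω → ℝ) (hmeas : ∀ i, Measurable (Z i))
    (hval : ∀ i ω, Z i ω = 0 ∨ Z i ω = 1)
    (hindep : iIndepFun Z P)
    (hid : ∀ i, IdentDistrib (Z i) (Z 0) P P)
    (q : ℝ) (hq0 : 0 ≤ q) (hq1 : q ≤ 1)
    (hq : ∀ i, P {ω | Z i ω = 1} = ENNReal.ofReal q)
    (N : ℕ) (hN : 0 < N) (T : ℕ) (α : ℝ) (hα0 : 0 < α) (hα1 : α < 1) :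
    P {ω | ∃ j : ℕ, 0 < j ∧
        Real.sqrt (Real.log ((π ^ 2 * (T + 1) / (3 * α)) * (j : ℝ) ^ 2) /
            (2 * j * N)) ≤
          |(1 / ((j : ℝ) * N)) * ∑ i ∈ Finset.range (j * N), Z i ω - q|} ≤
      ENNReal.ofReal (α / (T + 1)) := by
  have hπ : (3:ℝ) < π := Real.pi_gt_three
  have hT1 : (1:ℝ) ≤ (T:ℝ) + 1 := le_add_of_nonneg_left (Nat.cast_nonneg T)
  set C : ℝ := π ^ 2 * ((T:ℝ) + 1) / (3 * α) with hC_def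
  have hCpos : 0 < C := by positivity
  have hC3 : 3 < C := by
    rw [hC_def, lt_div_iff₀ (by positivity)]
    nlinarith
  set c : ℝ := 6 * α / (π ^ 2 * ((T:ℝ) + 1)) with hc_def
  have hset : {ω | ∃ j : ℕ, 0 < j ∧
        Real.sqrt (Real.log ((π ^ 2 * (T + 1) / (3 * α)) * (j : ℝ) ^ 2) /
            (2 * j * N)) ≤
          |(1 / ((j : ℝ) * N)) * ∑ i ∈ Finset.range (j * N), Z i ω - q|} =
      ⋃ j : ℕ, {ω | 0 < j ∧
        Real.sqrt (Real.log ((π ^ 2 * (T + 1) / (3 * α)) * (j : ℝ) ^ 2) /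
            (2 * j * N)) ≤
          |(1 / ((j : ℝ) * N)) * ∑ i ∈ Finset.range (j * N), Z i ω - q|} := by
    ext ω
    simp [Set.mem_iUnion, Set.mem_setOf_eq]
  rw [hset]
  refine (measure_iUnion_le _).trans ?_
  have hbound : ∀ j : ℕ, P {ω | 0 < j ∧
        Real.sqrt (Real.log ((π ^ 2 * (T + 1) / (3 * α)) * (j : ℝ) ^ 2) /
            (2 * j * N)) ≤
          |(1 / ((j : ℝ) * N)) * ∑ i ∈ Finset.range (j * N), Z i ω - q|} ≤
      ENNReal.ofReal (c * (1 / (j:ℝ) ^ 2)) := by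
    intro j
    rcases Nat.eq_zero_or_pos j with hj | hj
    · subst hj
      have : {ω : Ω | 0 < 0 ∧
        Real.sqrt (Real.log ((π ^ 2 * (T + 1) / (3 * α)) * ((0:ℕ) : ℝ) ^ 2) /
            (2 * ((0:ℕ):ℝ) * N)) ≤
          |(1 / (((0:ℕ) : ℝ) * N)) * ∑ i ∈ Finset.range (0 * N), Z i ω - q|} = ∅ := by
        ext ω; simp
      rw [this]
      simp
    · have hj' : (1:ℝ) ≤ (j:ℝ) := by exact_mod_cast hj
      have hN' : (0:ℝ) < (N:ℝ) := by exact_mod_cast hN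
      have hn : 0 < j * N := Nat.mul_pos hj hN
      have hCj2 : 1 < C * (j:ℝ) ^ 2 := by nlinarith
      have hlogpos : 0 < Real.log (C * (j:ℝ) ^ 2) := Real.log_pos hCj2
      set η : ℝ := Real.sqrt (Real.log (C * (j:ℝ) ^ 2) / (2 * (j:ℝ) * (N:ℝ))) with hη_def
      have hηpos : 0 < η := Real.sqrt_pos.mpr (by positivity)
      have hη2 : η ^ 2 = Real.log (C * (j:ℝ) ^ 2) / (2 * (j:ℝ) * (N:ℝ)) :=
        Real.sq_sqrt (by positivity)
      have hsub : {ω : Ω | 0 < j ∧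
          Real.sqrt (Real.log ((π ^ 2 * (T + 1) / (3 * α)) * (j : ℝ) ^ 2) /
              (2 * j * N)) ≤
            |(1 / ((j : ℝ) * N)) * ∑ i ∈ Finset.range (j * N), Z i ω - q|} ⊆
          {ω | η ≤ |(1 / ((j * N : ℕ) : ℝ)) * ∑ i ∈ Finset.range (j * N), Z i ω - q|} := by
        intro ω hω
        obtain ⟨-, hω⟩ := hω
        simp only [Set.mem_setOf_eq]
        rw [Nat.cast_mul]
        exact hω
      refine ((measure_mono hsub).trans
        (hoeffding_two_sided P Z hmeas hval hindep q hq0 hq1 hq (j * N) hn η hηpos)).trans ?_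
      apply ENNReal.ofReal_le_ofReal
      apply le_of_eq
      have hexp : -(2 * ((j * N : ℕ) : ℝ) * η ^ 2) = -Real.log (C * (j:ℝ) ^ 2) := by
        rw [hη2, Nat.cast_mul]
        field_simp
      rw [hexp, Real.exp_neg, Real.exp_log (by positivity)]
      rw [hc_def, hC_def]
      have hj0 : (j:ℝ) ≠ 0 := by positivity
      field_simp
      ring
  refine (ENNReal.tsum_le_tsum hbound).trans ?_
  rw [← ENNReal.ofReal_tsum_of_nonneg (fun j => by positivity)
    ((hasSum_zeta_two.mul_left c).summable)]
  rw [(hasSum_zeta_two.mul_left c).tsum_eq]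
  apply le_of_eq
  congr 1
  rw [hc_def]
  have hπ0 : π ≠ 0 := Real.pi_ne_zero
  field_simp
end
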